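/- Let p be an odd prime and let c, d, i be integers with p not dividing c. Then the sum over j from 0 to p-1 of (j/p)·((i²+cij+dj²)/p) is congruent modulo p to −(ci/p) · Σ_{k=0}^{p-1} C(4k,2k)·C(2k,k)·(d/(16c²))^k, where (·/p) denotes the Legendre symbol and d/(16c²) is interpreted modulo p. -/

import Mathlib

open Finset
lemma aux_choose_half (p : ℕ) [Fact p.Prime] (hp2 : p ≠ 2) :
    ∀ k, k ≤ p / 2 → ((-4 : ZMod p)) ^ k * ((p / 2).choose k : ZMod p)
      = ((2 * k).choose k : ZMod p) := by
  have hp : p.Prime := Fact.out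
  have hpm : p = 2 * (p / 2) + 1 := by
    have := Nat.odd_iff.mp (hp.odd_of_ne_two hp2); omega
  set m := p / 2 with hm
  have h2m : (2 : ZMod p) * (m : ZMod p) = -1 := by
    have : ((2 * m + 1 : ℕ) : ZMod p) = 0 := by rw [← hpm]; exact ZMod.natCast_self p
    push_cast at this; linear_combination this
  intro k
  induction k with
  | zero => simp
  | succ k ih =>
    intro hk1
    have hk : k ≤ m := by omega
    have hne : ((k + 1 : ℕ) : ZMod p) ≠ 0 := by
      rw [Ne, ZMod.natCast_eq_zero_iff]
      intro h
      have := Nat.le_of_dvd (by omega) h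
      omega
    apply mul_left_cancel₀ hne
    have h1 : (m.choose (k+1)) * (k+1) = m.choose k * (m - k) := Nat.choose_succ_right_eq m k
    have h2' : ((k+1 : ℕ) : ZMod p) * ((2*(k+1)).choose (k+1) : ℕ)
        = ((2 * (2*k+1) * ((2*k).choose k) : ℕ) : ZMod p) := by
      have h2 : (k+1) * ((2*(k+1)).choose (k+1)) = 2*(2*k+1)*((2*k).choose k) := by
        simpa [Nat.centralBinom] using Nat.succ_mul_centralBinom_succ k
      rw [← Nat.cast_mul, h2]
    have h1' : ((m.choose (k+1) : ℕ) : ZMod p) * ((k+1 : ℕ) : ZMod p)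
        = ((m.choose k : ℕ) : ZMod p) * ((m - k : ℕ) : ZMod p) := by
      rw [← Nat.cast_mul, ← Nat.cast_mul, h1]
    have hmk : ((m - k : ℕ) : ZMod p) = (m : ZMod p) - (k : ZMod p) := Nat.cast_sub hk
    have key : (-4 : ZMod p) * ((m : ZMod p) - k) = 2 * (2 * (k : ZMod p) + 1) := by
      linear_combination (-2 : ZMod p) * h2m
    push_cast at h2' h1' hmk ⊢
    calc ((k:ZMod p)+1) * ((-4)^(k+1) * (m.choose (k+1) : ZMod p))
        = (-4)^k * (((m.choose (k+1) : ℕ) : ZMod p) * ((k:ZMod p)+1)) * (-4) := by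
          push_cast; ring
      _ = (-4)^k * ((m.choose k : ℕ) : ZMod p) * ((-4) * ((m:ZMod p) - k)) := by
          rw [h1', hmk]; ring
      _ = ((2*k).choose k : ZMod p) * (2 * (2*(k:ZMod p)+1)) := by rw [ih hk, key]
      _ = ((k:ZMod p)+1) * (((2*(k+1)).choose (k+1) : ℕ) : ZMod p) := by
          rw [h2']; push_cast; ring

lemma aux_sum_pow (p : ℕ) [Fact p.Prime] {t : ℕ} (ht : t ≠ 0) :
    ∑ x : ZMod p, x ^ t = if p - 1 ∣ t then -1 else 0 := by
  classical
  have : NeZero p := ⟨(Fact.out : p.Prime).ne_zero⟩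
  let φ : (ZMod p)ˣ ↪ ZMod p := ⟨fun x ↦ x, Units.val_injective⟩
  have hmap : univ.map φ = univ \ {0} := by
    ext x
    simp only [mem_map, mem_univ, Function.Embedding.coeFn_mk, true_and, mem_sdiff,
      mem_singleton, φ]; exact isUnit_iff_ne_zero
  calc
    ∑ x : ZMod p, x ^ t = ∑ x ∈ univ \ {(0 : ZMod p)}, x ^ t := by
      rw [← sum_sdiff ({0} : Finset (ZMod p)).subset_univ, sum_singleton, zero_pow ht, add_zero]
    _ = ∑ x : (ZMod p)ˣ, (x ^ t : ZMod p) := by simp [φ, ← hmap, univ.sum_map φ]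
    _ = if p - 1 ∣ t then -1 else 0 := by
      rw [FiniteField.sum_pow_units, ZMod.card]

lemma aux_lhs (p : ℕ) [Fact p.Prime] (hp2 : p ≠ 2) (C D I : ZMod p) :
    ∑ x : ZMod p, x ^ (p/2) * (I^2 + C*I*x + D*x^2) ^ (p/2)
      = ∑ k ∈ Finset.range (p/2 + 1),
          if 2*k ≤ p/2 then
            -((I^2)^k * (C*I)^(p/2 - 2*k) * D^k * ((p/2).choose k : ZMod p)
               * ((p/2 - k).choose k : ZMod p))
          else 0 := by
  have hp : p.Prime := Fact.out
  have hpo : p % 2 = 1 := Nat.odd_iff.mp (hp.odd_of_ne_two hp2)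
  have hple : 2 ≤ p := hp.two_le
  have hpm : p = 2 * (p / 2) + 1 := by omega
  set m := p / 2 with hm
  have hm1 : 1 ≤ m := by omega
  -- step 1: expand
  have expand : ∀ x : ZMod p, x^m * (I^2 + C*I*x + D*x^2)^m
      = ∑ b ∈ range (m+1), ∑ a ∈ range (b+1),
          (I^2)^a * (C*I)^(b-a) * D^(m-b) * ((m.choose b : ℕ) : ZMod p)
            * ((b.choose a : ℕ) : ZMod p) * x^(m + (b-a) + 2*(m-b)) := by
    intro x
    rw [add_pow (I^2 + C*I*x) (D*x^2) m, Finset.mul_sum]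
    refine Finset.sum_congr rfl fun b hb => ?_
    rw [add_pow (I^2) (C*I*x) b, Finset.sum_mul, Finset.sum_mul, Finset.mul_sum]
    refine Finset.sum_congr rfl fun a ha => ?_
    rw [mul_pow (C*I) x, mul_pow D (x^2), ← pow_mul]
    ring
  rw [Finset.sum_congr rfl fun x _ => expand x]
  rw [Finset.sum_comm]
  have hinner : ∀ b', b' ≤ m → ∀ a ∈ range (b'+1),
      (∑ x : ZMod p, (I^2)^a * (C*I)^(b'-a) * D^(m-b') * ((m.choose b' : ℕ) : ZMod p)
        * ((b'.choose a : ℕ) : ZMod p) * x^(m + (b'-a) + 2*(m-b')))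
      = if a = m - b' then
          -((I^2)^a * (C*I)^(b'-a) * D^(m-b') * ((m.choose b' : ℕ) : ZMod p)
            * ((b'.choose a : ℕ) : ZMod p)) * (if m ≤ 2*b' then 1 else 0) else 0 := by
    intro b hbm a ha
    rw [mem_range] at ha
    have hab : a ≤ b := by omega
    rw [← Finset.mul_sum, aux_sum_pow p (by omega : m + (b-a) + 2*(m-b) ≠ 0)]
    have hdvd : (p - 1 ∣ m + (b-a) + 2*(m-b)) ↔ (a = m - b ∧ m ≤ 2*b) := by
      constructor
      · rintro ⟨s, hs⟩
        have hp1 : p - 1 = 2 * m := by omega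
        rw [hp1] at hs
        rcases s with _ | _ | s
        · simp at hs; omega
        · have h1 : 2 * m * 1 = 2 * m := by ring
          rw [h1] at hs
          constructor <;> omega
        · exfalso
          have hexp : 2 * m * (s + 1 + 1) = 4 * m + 2 * m * s := by ring
          rw [hexp] at hs
          omega
      · rintro ⟨h1, h2⟩
        exact ⟨1, by omega⟩
    by_cases hc : a = m - b ∧ m ≤ 2*b
    · rw [if_pos (hdvd.mpr hc), if_pos hc.1, if_pos hc.2]
      ring
    · rw [if_neg (fun h => hc (hdvd.mp h))]
      rcases Decidable.em (a = m - b) with h1 | h1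
      · have h2 : ¬ m ≤ 2*b := fun h2 => hc ⟨h1, h2⟩
        rw [if_pos h1, if_neg h2]
        ring
      · rw [if_neg h1]
        exact mul_zero _
  rw [← Finset.sum_range_reflect]
  refine Finset.sum_congr rfl fun b hb => ?_
  rw [mem_range] at hb
  have hbm : b ≤ m := by omega
  simp only [Nat.add_sub_cancel]
  rw [Finset.sum_comm]
  rw [Finset.sum_congr rfl (hinner (m-b) (by omega)),
    Finset.sum_ite_eq' (range (m-b+1)) (m-(m-b))]
  simp only [mem_range]
  have e0 : m - (m - b) = b := by omega
  by_cases hcase : 2*b ≤ m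
  · rw [e0, if_pos (by omega), if_pos (by omega : m ≤ 2*(m-b))]
    have e1 : m - b - b = m - 2*b := by omega
    rw [e1, Nat.choose_symm hbm, if_pos hcase]
    ring
  · rw [if_neg (by omega), if_neg hcase]

lemma aux_vanish (p : ℕ) (hp : p.Prime) {k : ℕ} (h4 : p ≤ 4 * k) (hk : k < p) :
    p ∣ (4 * k).choose (2 * k) * (2 * k).choose k := by
  rcases lt_or_ge (2 * k) p with h | h
  · exact Dvd.dvd.mul_right (hp.dvd_choose h (by omega) (by omega)) _
  · exact Dvd.dvd.mul_left (hp.dvd_choose hk (by omega) (by omega)) _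

lemma aux_reindex {M : Type*} [AddCommMonoid M] (p : ℕ) [NeZero p] (f : ZMod p → M) :
    ∑ j ∈ Finset.range p, f (j : ZMod p) = ∑ x : ZMod p, f x := by
  refine Finset.sum_nbij' (fun j => (j : ZMod p)) (fun x => x.val) ?_ ?_ ?_ ?_ ?_
  · intro a _; exact Finset.mem_univ _
  · intro x _; exact Finset.mem_range.mpr (ZMod.val_lt x)
  · intro a ha; exact ZMod.val_cast_of_lt (Finset.mem_range.mp ha)
  · intro x _; exact ZMod.natCast_rightInverse x
  · intro a _; rfl

theorem stmt_0 (p : ℕ) [Fact p.Prime] (hp2 : p ≠ 2) (c d i : ℤ)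
    (hc : ¬ (p : ℤ) ∣ c) :
    ((∑ j ∈ Finset.range p,
        legendreSym p j * legendreSym p (i ^ 2 + c * i * j + d * j ^ 2) : ℤ) : ZMod p)
      = -((legendreSym p (c * i) : ℤ) : ZMod p) *
          ∑ k ∈ Finset.range p,
            ((Nat.choose (4 * k) (2 * k) * Nat.choose (2 * k) k : ℕ) : ZMod p) *
              ((d : ZMod p) * ((16 * (c : ZMod p) ^ 2))⁻¹) ^ k := by
  have hp : p.Prime := Fact.out
  have : NeZero p := ⟨hp.ne_zero⟩
  have hpo : p % 2 = 1 := Nat.odd_iff.mp (hp.odd_of_ne_two hp2)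
  have hple : 2 ≤ p := hp.two_le
  set m := p / 2 with hm
  have hpm : p = 2 * m + 1 := by omega
  set C := ((c : ℤ) : ZMod p) with hCdef
  set D := ((d : ℤ) : ZMod p) with hDdef
  set I := ((i : ℤ) : ZMod p) with hIdef
  have hCne : C ≠ 0 := by
    rw [hCdef, Ne, ZMod.intCast_zmod_eq_zero_iff_dvd]; exact hc
  have h2ne : (2 : ZMod p) ≠ 0 := by
    have : ((2 : ℕ) : ZMod p) ≠ 0 := by
      rw [Ne, ZMod.natCast_eq_zero_iff]
      intro h; exact hp2 ((Nat.prime_dvd_prime_iff_eq hp Nat.prime_two).mp h)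
    simpa using this
  have h16ne : (16 : ZMod p) ≠ 0 := by
    have : (16 : ZMod p) = 2 ^ 4 := by norm_num
    rw [this]; exact pow_ne_zero _ h2ne
  -- Step A : rewrite LHS as a sum over ZMod p
  have hA : ((∑ j ∈ Finset.range p,
        legendreSym p j * legendreSym p (i ^ 2 + c * i * j + d * j ^ 2) : ℤ) : ZMod p)
      = ∑ x : ZMod p, x ^ m * (I ^ 2 + C * I * x + D * x ^ 2) ^ m := by
    rw [← aux_reindex p (fun x => x ^ m * (I ^ 2 + C * I * x + D * x ^ 2) ^ m)]
    push_cast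
    refine Finset.sum_congr rfl fun j hj => ?_
    rw [legendreSym.eq_pow, legendreSym.eq_pow]
    push_cast
    ring
  rw [hA, aux_lhs p hp2 C D I]
  -- Step B : rewrite RHS
  have hcast : (((c * i : ℤ)) : ZMod p) = C * I := by push_cast; ring
  rw [legendreSym.eq_pow, hcast]
  rw [neg_mul, Finset.mul_sum, ← Finset.sum_neg_distrib]
  have key : ∀ k ∈ Finset.range p,
      -( (C * I) ^ m * (((Nat.choose (4 * k) (2 * k) * Nat.choose (2 * k) k : ℕ) : ZMod p) *
          (D * ((16 * C ^ 2))⁻¹) ^ k) )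
      = if 2 * k ≤ m then
          -((I ^ 2) ^ k * (C * I) ^ (m - 2 * k) * D ^ k * ((m.choose k : ℕ) : ZMod p)
            * (((m - k).choose k : ℕ) : ZMod p))
        else 0 := by
    intro k hk
    rw [mem_range] at hk
    by_cases hcase : 2 * k ≤ m
    · rw [if_pos hcase]
      have hch : (((4 * k).choose (2 * k) : ℕ) : ZMod p)
          = (16 : ZMod p) ^ k * (((m.choose (2 * k)) : ℕ) : ZMod p) := by
        have h := aux_choose_half p hp2 (2 * k) (by omega)
        have h4k : 2 * (2 * k) = 4 * k := by ring
        rw [h4k] at h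
        rw [← h, pow_mul]
        norm_num
        exact Or.inl rfl
      have hnat : (m.choose (2 * k)) * ((2 * k).choose k) = m.choose k * ((m - k).choose k) := by
        have h := Nat.choose_mul (n := m) (show k ≤ 2 * k by omega)
        have : 2 * k - k = k := by omega
        rwa [this] at h
      have hnatC : (((m.choose (2 * k)) : ℕ) : ZMod p) * (((2 * k).choose k : ℕ) : ZMod p)
          = ((m.choose k : ℕ) : ZMod p) * (((m - k).choose k : ℕ) : ZMod p) := by
        rw [← Nat.cast_mul, ← Nat.cast_mul, hnat]
      have hXY : (16 : ZMod p) ^ k * ((16 * C ^ 2)⁻¹) ^ k * (C ^ 2) ^ k = 1 := by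
        rw [← mul_pow, ← mul_pow]
        have : (16 : ZMod p) * (16 * C ^ 2)⁻¹ * C ^ 2 = 1 := by
          field_simp
        rw [this, one_pow]
      have hpowm : (C * I) ^ m = (C * I) ^ (m - 2 * k) * ((C * I) ^ 2) ^ k := by
        rw [← pow_mul, ← pow_add]
        congr 1
        omega
      rw [Nat.cast_mul, hch, hpowm]
      linear_combination
        (-(16 : ZMod p) ^ k * ((16 * C ^ 2)⁻¹) ^ k * (C * I) ^ (m - 2 * k) * (C ^ 2) ^ k
            * (I ^ 2) ^ k * D ^ k) * hnatC
        + (-(((m.choose k : ℕ) : ZMod p) * (((m - k).choose k : ℕ) : ZMod p))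
            * (C * I) ^ (m - 2 * k) * (I ^ 2) ^ k * D ^ k) * hXY
    · rw [if_neg hcase]
      have hz : (((4 * k).choose (2 * k) * (2 * k).choose k : ℕ) : ZMod p) = 0 := by
        rw [ZMod.natCast_eq_zero_iff]
        exact aux_vanish p hp (by omega) hk
      rw [hz]
      ring
  rw [Finset.sum_congr rfl key]
  refine Finset.sum_subset (Finset.range_subset_range.mpr (by omega)) fun k hk hk2 => ?_
  rw [mem_range] at hk hk2
  rw [if_neg (by omega)]
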